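/- arXiv:1302.0133 — 2 statements merged into one kernel-verified Lean document; each statement's English description precedes it below -/
import Mathlib

section
/- Let n ≥ 2 be even and a ∈ {1,2}. In the graded ring R = ℤ[x₁,x₂]/⟨x₁^{n+1}, x₂(a·x₁+x₂)⟩ (generators in degree 2), the group of graded ring automorphisms consists of exactly the four maps given on (x₁,x₂) by the matrices I, −I, (1,0;−a,−1), (−1,0;a,1), and it is isomorphic to ℤ/2 × ℤ/2. -/
open MvPolynomial

/-- `R = ℤ[x₁,x₂]/⟨x₁^{n+1}, x₂(a·x₁+x₂)⟩`, the integral cohomology ring of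
`ℂP^{n+1}_a # conj(ℂP^{n+1}_a)`, with both generators in degree 2. -/
noncomputable abbrev Rq (n : ℕ) (a : ℤ) : Type :=
  MvPolynomial (Fin 2) ℤ ⧸
    Ideal.span ({(X 0 : MvPolynomial (Fin 2) ℤ) ^ (n + 1),
      X 1 * (C a * X 0 + X 1)} : Set (MvPolynomial (Fin 2) ℤ))

noncomputable def x₁ (n : ℕ) (a : ℤ) : Rq n a := Ideal.Quotient.mk _ (X 0)

noncomputable def x₂ (n : ℕ) (a : ℤ) : Rq n a := Ideal.Quotient.mk _ (X 1)

/-- A ring automorphism of `R` is graded iff it preserves the degree-2 part,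
which is the free abelian group spanned by `x₁, x₂`. -/
def IsGraded (n : ℕ) (a : ℤ) (φ : RingAut (Rq n a)) : Prop :=
  φ (x₁ n a) ∈ Submodule.span ℤ ({x₁ n a, x₂ n a} : Set (Rq n a)) ∧
  φ (x₂ n a) ∈ Submodule.span ℤ ({x₁ n a, x₂ n a} : Set (Rq n a))

section helpers
variable {R S : Type*} [CommRing R] [CommRing S] [Algebra R S]

lemma pb_two_coord (pb : PowerBasis R S) {k m : ℕ} (hk : k < pb.dim) (hm : m < pb.dim)
    (hkm : k ≠ m) {c d : R} (h : c • pb.gen ^ k + d • pb.gen ^ m = 0) : c = 0 ∧ d = 0 := by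
  have hbk : pb.gen ^ k = pb.basis ⟨k, hk⟩ := by rw [pb.coe_basis]
  have hbm : pb.gen ^ m = pb.basis ⟨m, hm⟩ := by rw [pb.coe_basis]
  rw [hbk, hbm] at h
  have h' := congrArg pb.basis.repr h
  rw [map_add, map_smul, map_smul, pb.basis.repr_self, pb.basis.repr_self, map_zero] at h'
  constructor
  · have := congrArg (fun f => f ⟨k, hk⟩) h'
    simpa [Finsupp.single_apply, (Fin.val_ne_iff).1, hkm, Fin.mk.injEq, (Ne.symm hkm)] using this
  · have := congrArg (fun f => f ⟨m, hm⟩) h'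
    simpa [Finsupp.single_apply, Fin.mk.injEq, hkm] using this

lemma pb_one_coord (pb : PowerBasis R S) {k : ℕ} (hk : k < pb.dim)
    {c : R} (h : c • pb.gen ^ k = 0) : c = 0 := by
  have hbk : pb.gen ^ k = pb.basis ⟨k, hk⟩ := by rw [pb.coe_basis]
  rw [hbk] at h
  have h' := congrArg pb.basis.repr h
  rw [map_smul, pb.basis.repr_self, map_zero] at h'
  have := congrArg (fun f => f ⟨k, hk⟩) h'
  simpa [Finsupp.single_apply] using this

lemma pb_dvd (pb : PowerBasis R S) {k : ℕ} (hk : k < pb.dim)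
    {c : R} {p : S} (h : c • p = pb.gen ^ k) : ∃ d, c * d = 1 := by
  refine ⟨pb.basis.repr p ⟨k, hk⟩, ?_⟩
  have hbk : pb.gen ^ k = pb.basis ⟨k, hk⟩ := by rw [pb.coe_basis]
  rw [hbk] at h
  have h' := congrArg pb.basis.repr h
  rw [map_smul, pb.basis.repr_self] at h'
  have := congrArg (fun f => f ⟨k, hk⟩) h'
  simpa [Finsupp.single_apply] using this

lemma pb_repr_two (pb : PowerBasis R S) (hdim : pb.dim = 2) (z : S) :
    ∃ p q : R, z = p • (1 : S) + q • pb.gen := by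
  have hz : z ∈ Submodule.span R ({(1 : S), pb.gen} : Set S) := by
    have hspan : Submodule.span R (Set.range pb.basis) = ⊤ := pb.basis.span_eq
    have hle : Submodule.span R (Set.range ⇑pb.basis) ≤ Submodule.span R {(1 : S), pb.gen} := by
      rw [Submodule.span_le]
      rintro _ ⟨i, rfl⟩
      rw [pb.coe_basis]
      have hi : (i : ℕ) < 2 := hdim ▸ i.isLt
      interval_cases h : (i : ℕ)
      · simp only []; rw [h, pow_zero]
        exact Submodule.subset_span (by simp)
      · simp only []; rw [h, pow_one]
        exact Submodule.subset_span (show pb.gen ∈ ({1, pb.gen} : Set S) by simp)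
    have : z ∈ Submodule.span R (Set.range ⇑pb.basis) := by rw [hspan]; trivial
    exact hle this
  obtain ⟨p, q, hpq⟩ := Submodule.mem_span_pair.mp hz
  exact ⟨p, q, hpq.symm⟩

end helpers

namespace RqAux
open Polynomial

noncomputable abbrev Aq (n : ℕ) : Type := AdjoinRoot ((Polynomial.X : Polynomial ℤ) ^ (n+1))
noncomputable def tA (n : ℕ) : Aq n := AdjoinRoot.root _

instance AqNontrivial (n : ℕ) : Nontrivial (Aq n) :=
  AdjoinRoot.nontrivial _ (by rw [Polynomial.degree_X_pow]; exact_mod_cast Nat.succ_ne_zero n)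

lemma tA_pow (n : ℕ) : (tA n) ^ (n+1) = 0 := by
  rw [tA, ← AdjoinRoot.mk_X, ← map_pow, AdjoinRoot.mk_self]

noncomputable def pbA (n : ℕ) : PowerBasis ℤ (Aq n) := AdjoinRoot.powerBasis' (monic_X_pow _)
lemma pbA_dim (n : ℕ) : (pbA n).dim = n+1 := by simp [pbA]
lemma pbA_gen (n : ℕ) : (pbA n).gen = tA n := by simp [pbA, tA]

noncomputable def qpoly (n : ℕ) (a : ℤ) : Polynomial (Aq n) :=
  Polynomial.X ^ 2 + Polynomial.C (a • tA n) * Polynomial.X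

lemma qpoly_monic (n : ℕ) (a : ℤ) : (qpoly n a).Monic := by
  apply Polynomial.monic_X_pow_add
  have : (Polynomial.C (a • tA n) * Polynomial.X).degree ≤ 0 + 1 :=
        le_trans (Polynomial.degree_mul_le _ _)
          (add_le_add Polynomial.degree_C_le Polynomial.degree_X_le)
  refine lt_of_le_of_lt this ?_
  norm_num

lemma qpoly_natDegree (n : ℕ) (a : ℤ) : (qpoly n a).natDegree = 2 := by
  rw [qpoly]
  rw [Polynomial.natDegree_add_eq_left_of_natDegree_lt]
  · exact Polynomial.natDegree_X_pow 2
  · rw [Polynomial.natDegree_X_pow]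
    calc (Polynomial.C (a • tA n) * Polynomial.X).natDegree ≤ 0 + 1 :=
          le_trans (Polynomial.natDegree_mul_le)
            (add_le_add (Polynomial.natDegree_C _).le Polynomial.natDegree_X_le)
      _ < 2 := by norm_num

noncomputable abbrev Tq (n : ℕ) (a : ℤ) : Type := AdjoinRoot (qpoly n a)
noncomputable def yT (n : ℕ) (a : ℤ) : Tq n a := AdjoinRoot.root _
noncomputable def tT (n : ℕ) (a : ℤ) : Tq n a := algebraMap (Aq n) (Tq n a) (tA n)

noncomputable def pbT (n : ℕ) (a : ℤ) : PowerBasis (Aq n) (Tq n a) :=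
  AdjoinRoot.powerBasis' (qpoly_monic n a)
lemma pbT_dim (n : ℕ) (a : ℤ) : (pbT n a).dim = 2 := by simp [pbT, qpoly_natDegree]
lemma pbT_gen (n : ℕ) (a : ℤ) : (pbT n a).gen = yT n a := by simp [pbT, yT]

lemma y_rel (n : ℕ) (a : ℤ) : (yT n a)^2 = -(a • (tT n a * yT n a)) := by
  have h : Polynomial.aeval (yT n a) (qpoly n a) = 0 := by
    rw [Polynomial.aeval_def, AdjoinRoot.algebraMap_eq, yT]
    exact AdjoinRoot.eval₂_root _
  simp only [qpoly, map_add, map_mul, map_pow, Polynomial.aeval_X, Polynomial.aeval_C] at h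
  have h2 : algebraMap (Aq n) (Tq n a) (a • tA n) = a • tT n a := by
    rw [tT, map_zsmul]
  rw [h2] at h
  have : a • tT n a * yT n a = a • (tT n a * yT n a) := smul_mul_assoc a _ _
  rw [this] at h
  linear_combination h

lemma tT_pow (n : ℕ) (a : ℤ) : (tT n a) ^ (n+1) = 0 := by
  rw [tT, ← map_pow, tA_pow, map_zero]

lemma Ca_cast (n : ℕ) (a : ℤ) :
    (MvPolynomial.C a : MvPolynomial (Fin 2) ℤ) = (a : MvPolynomial (Fin 2) ℤ) := by
  simpa using map_intCast (MvPolynomial.C : ℤ →+* MvPolynomial (Fin 2) ℤ) a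

noncomputable def ψf (n : ℕ) (a : ℤ) : MvPolynomial (Fin 2) ℤ →+* Tq n a :=
  (MvPolynomial.aeval ![tT n a, yT n a]).toRingHom

lemma ψf_ker (n : ℕ) (a : ℤ) :
    Ideal.span ({(MvPolynomial.X 0 : MvPolynomial (Fin 2) ℤ) ^ (n + 1),
      MvPolynomial.X 1 * (MvPolynomial.C a * MvPolynomial.X 0 + MvPolynomial.X 1)} :
        Set (MvPolynomial (Fin 2) ℤ)) ≤ RingHom.ker (ψf n a) := by
  rw [Ideal.span_le]
  rintro p hp
  simp only [Set.mem_insert_iff, Set.mem_singleton_iff] at hp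
  rcases hp with rfl | rfl
  · simp only [SetLike.mem_coe, RingHom.mem_ker, ψf, AlgHom.toRingHom_eq_coe,
      RingHom.coe_coe, map_pow, MvPolynomial.aeval_X]
    simp [tT_pow]
  · simp only [SetLike.mem_coe, RingHom.mem_ker, ψf, AlgHom.toRingHom_eq_coe,
      RingHom.coe_coe, map_mul, map_add, MvPolynomial.aeval_X, MvPolynomial.aeval_C]
    have hy := y_rel n a
    have h1 : (algebraMap ℤ (Tq n a)) a = (a : Tq n a) := by simp
    rw [h1]
    simp only [Matrix.cons_val_one, Matrix.head_cons, Matrix.cons_val_zero]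
    have h2 : (a : Tq n a) * tT n a = a • tT n a := (zsmul_eq_mul _ _).symm
    rw [h2]
    calc yT n a * (a • tT n a + yT n a)
        = a • (tT n a * yT n a) + (yT n a)^2 := by
          rw [mul_add, mul_smul_comm, ← pow_two]; ring_nf
      _ = 0 := by rw [hy]; ring

noncomputable def ψ (n : ℕ) (a : ℤ) : Rq n a →+* Tq n a :=
  Ideal.Quotient.lift _ (ψf n a) (fun p hp => RingHom.mem_ker.mp (ψf_ker n a hp))

lemma ψ_x₁ (n : ℕ) (a : ℤ) : ψ n a (x₁ n a) = tT n a := by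
  rw [x₁, ψ, Ideal.Quotient.lift_mk]
  simp [ψf]

lemma ψ_x₂ (n : ℕ) (a : ℤ) : ψ n a (x₂ n a) = yT n a := by
  rw [x₂, ψ, Ideal.Quotient.lift_mk]
  simp [ψf]

lemma x₁_pow (n : ℕ) (a : ℤ) : (x₁ n a) ^ (n+1) = 0 := by
  rw [x₁, ← map_pow, Ideal.Quotient.eq_zero_iff_mem]
  exact Ideal.subset_span (by simp)

lemma mk_Ca (n : ℕ) (a : ℤ) :
    (Ideal.Quotient.mk _ (MvPolynomial.C a) : Rq n a) = (a : Rq n a) := by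
  have h := congrArg (Ideal.Quotient.mk (Ideal.span
    ({(MvPolynomial.X 0 : MvPolynomial (Fin 2) ℤ) ^ (n + 1),
      MvPolynomial.X 1 * (MvPolynomial.C a * MvPolynomial.X 0 + MvPolynomial.X 1)} :
        Set (MvPolynomial (Fin 2) ℤ)))) (Ca_cast n a)
  rw [map_intCast] at h
  exact h

lemma x₂_rel (n : ℕ) (a : ℤ) : (x₂ n a) * (a • x₁ n a + x₂ n a) = 0 := by
  have h : (a • x₁ n a : Rq n a) = Ideal.Quotient.mk _ (MvPolynomial.C a * MvPolynomial.X 0) := by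
    rw [x₁, map_mul, zsmul_eq_mul, mk_Ca]
  rw [x₂, h, ← map_add, ← map_mul, Ideal.Quotient.eq_zero_iff_mem]
  exact Ideal.subset_span (by simp)

lemma y_rel2 (n : ℕ) (a : ℤ) :
    (yT n a)^2 + (a : Tq n a) * (tT n a * yT n a) = 0 := by
  have h := y_rel n a
  rw [zsmul_eq_mul] at h
  linear_combination h

lemma pow_expand (n : ℕ) (a : ℤ) (α β : ℤ) (k : ℕ) :
    ∃ C : ℤ, ((α : Tq n a) * tT n a + (β : Tq n a) * yT n a)^(k+1)
        = (α : Tq n a)^(k+1) * (tT n a)^(k+1) + (C : Tq n a) * ((tT n a)^k * yT n a)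
      ∧ a * C = α^(k+1) - (α - a*β)^(k+1) := by
  induction k with
  | zero =>
    refine ⟨β, by push_cast; ring, by ring⟩
  | succ k ih =>
    obtain ⟨C, hC, haC⟩ := ih
    refine ⟨α^(k+1)*β + C*α - a*β*C, ?_, ?_⟩
    · have : ((α : Tq n a) * tT n a + (β : Tq n a) * yT n a)^(k+1+1)
          = ((α : Tq n a) * tT n a + (β : Tq n a) * yT n a)^(k+1)
            * ((α : Tq n a) * tT n a + (β : Tq n a) * yT n a) := by ring
      rw [this, hC]
      push_cast
      linear_combination ((β : Tq n a) * (C : Tq n a) * (tT n a)^k) * y_rel2 n a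
    · linear_combination (α - a*β) * haC

lemma smulA_one (n : ℕ) (a : ℤ) (c : ℤ) (p : Aq n) :
    ((c • p) • (1 : Tq n a)) = (c : Tq n a) * algebraMap (Aq n) (Tq n a) p := by
  have h1 : p • (1 : Tq n a) = algebraMap (Aq n) (Tq n a) p := by
    rw [Algebra.smul_def, mul_one]
  rw [smul_assoc, h1, zsmul_eq_mul]

lemma smulA_y (n : ℕ) (a : ℤ) (c : ℤ) (p : Aq n) :
    ((c • p) • yT n a) = (c : Tq n a) * (algebraMap (Aq n) (Tq n a) p * yT n a) := by
  have h1 : p • yT n a = algebraMap (Aq n) (Tq n a) p * yT n a := Algebra.smul_def p _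
  rw [smul_assoc, h1, zsmul_eq_mul]

set_option maxHeartbeats 1000000 in
lemma key (n : ℕ) (a : ℤ) (hn : 2 ≤ n) (heven : Even n) (ha : a = 1 ∨ a = 2)
    (φ : RingAut (Rq n a)) (α β γ δ : ℤ)
    (h1 : φ (x₁ n a) = α • x₁ n a + β • x₂ n a)
    (h2 : φ (x₂ n a) = γ • x₁ n a + δ • x₂ n a) :
    β = 0 ∧ ((α = 1 ∧ γ = 0 ∧ δ = 1) ∨ (α = -1 ∧ γ = 0 ∧ δ = -1) ∨
             (α = 1 ∧ γ = -a ∧ δ = -1) ∨ (α = -1 ∧ γ = a ∧ δ = 1)) := by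
  have ha0 : a ≠ 0 := by rcases ha with rfl | rfl <;> norm_num
  have hdimA : 1 < (pbA n).dim := by rw [pbA_dim]; omega
  have hdimA2 : 2 < (pbA n).dim := by rw [pbA_dim]; omega
  have hdimAn : n < (pbA n).dim := by rw [pbA_dim]; omega
  have hdimA0 : 0 < (pbA n).dim := by rw [pbA_dim]; omega
  have hdT0 : 0 < (pbT n a).dim := by rw [pbT_dim]; omega
  have hdT1 : 1 < (pbT n a).dim := by rw [pbT_dim]; omega
  -- push images through ψ
  have e1 : ψ n a (φ (x₁ n a)) = (α : Tq n a) * tT n a + (β : Tq n a) * yT n a := by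
    rw [h1, map_add, map_zsmul, map_zsmul, ψ_x₁, ψ_x₂, zsmul_eq_mul, zsmul_eq_mul]
  have e2 : ψ n a (φ (x₂ n a)) = (γ : Tq n a) * tT n a + (δ : Tq n a) * yT n a := by
    rw [h2, map_add, map_zsmul, map_zsmul, ψ_x₁, ψ_x₂, zsmul_eq_mul, zsmul_eq_mul]
  -- Step 1 : β = 0
  have hβ : β = 0 := by
    have hφ1 : (φ (x₁ n a))^(n+1) = 0 := by
      rw [← map_pow, x₁_pow, map_zero]
    have hT1 : ((α : Tq n a) * tT n a + (β : Tq n a) * yT n a)^(n+1) = 0 := by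
      rw [← e1, ← map_pow, hφ1, map_zero]
    obtain ⟨C, hC, haC⟩ := pow_expand n a α β n
    rw [hC, tT_pow] at hT1
    have hT2 : (C • ((tA n)^n)) • yT n a = 0 := by
      rw [smulA_y]
      rw [map_pow]
      rw [← tT]
      linear_combination hT1
    have hcoord : (0 : Aq n) • (yT n a)^0 + (C • ((tA n)^n)) • (yT n a)^1 = 0 := by
      rw [pow_one, hT2]; simp
    have h0 := (pb_two_coord (pbT n a) hdT0 hdT1 (by norm_num)
      (by rw [pbT_gen]; exact hcoord)).2
    have hC0 : C = 0 := by
      refine pb_one_coord (pbA n) hdimAn ?_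
      rw [pbA_gen]; exact h0
    rw [hC0, mul_zero] at haC
    have hpow : α^(n+1) = (α - a*β)^(n+1) := by omega
    have hodd : Odd (n+1) := Even.add_one heven
    have := (Odd.strictMono_pow (R := ℤ) hodd).injective hpow
    have : a * β = 0 := by omega
    rcases mul_eq_zero.mp this with h | h
    · exact absurd h ha0
    · exact h
  subst hβ
  -- φ x₁ = α • x₁
  have h1' : φ (x₁ n a) = α • x₁ n a := by rw [h1]; simp
  have e1' : ψ n a (φ (x₁ n a)) = (α : Tq n a) * tT n a := by rw [e1]; push_cast; ring
  -- Step 2 : α = ±1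
  have hα : α = 1 ∨ α = -1 := by
    have hsymm : α • (φ.symm (x₁ n a)) = x₁ n a := by
      rw [← map_zsmul, ← h1', RingEquiv.symm_apply_apply]
    obtain ⟨p, q, hpq⟩ := pb_repr_two (pbT n a) (pbT_dim n a) (ψ n a (φ.symm (x₁ n a)))
    rw [pbT_gen] at hpq
    have hE : (α • p) • (1 : Tq n a) + (α • q) • yT n a
        = (tA n) • (1 : Tq n a) := by
      rw [smul_assoc, smul_assoc, ← smul_add, ← hpq, ← map_zsmul, hsymm, ψ_x₁, tT,
        Algebra.smul_def, mul_one]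
    have hE2 : (α • p - tA n) • ((yT n a)^0) + (α • q) • ((yT n a)^1) = 0 := by
      rw [pow_zero, pow_one, sub_smul, ← hE]; abel
    have h0 := (pb_two_coord (pbT n a) hdT0 hdT1 (by norm_num)
      (by rw [pbT_gen]; exact hE2)).1
    have : α • p = (pbA n).gen ^ 1 := by
      rw [pbA_gen, pow_one]
      have := sub_eq_zero.mp h0
      exact this
    obtain ⟨d, hd⟩ := pb_dvd (pbA n) hdimA this
    exact Int.isUnit_iff.mp (IsUnit.of_mul_eq_one _ hd)
  have hα2 : α * α = 1 := by rcases hα with rfl | rfl <;> norm_num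
  -- Step 3 : push relation 2
  have hrel : (φ (x₂ n a)) * (a • φ (x₁ n a) + φ (x₂ n a)) = 0 := by
    have := congrArg φ (x₂_rel n a)
    rw [map_mul, map_add, map_zsmul, map_zero] at this
    exact this
  have E4 : ((γ : Tq n a) * tT n a + (δ : Tq n a) * yT n a)
      * ((a : Tq n a) * ((α : Tq n a) * tT n a)
        + ((γ : Tq n a) * tT n a + (δ : Tq n a) * yT n a)) = 0 := by
    have := congrArg (ψ n a) hrel
    rw [map_mul, map_add, map_zsmul, map_zero, e1', e2, zsmul_eq_mul] at this
    exact this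
  have E5 : ((γ*(a*α+γ)) • ((tA n)^2)) • ((yT n a)^0)
      + ((δ*(a*α+2*γ) - a*δ^2) • (tA n)) • ((yT n a)^1) = 0 := by
    rw [pow_zero, pow_one, smulA_one, smulA_y, map_pow, ← tT]
    push_cast
    linear_combination E4 - (δ : Tq n a)^2 * y_rel2 n a
  have hco := pb_two_coord (pbT n a) hdT0 hdT1 (by norm_num)
      (by rw [pbT_gen]; exact E5)
  have hc1 : γ*(a*α+γ) = 0 := by
    refine pb_one_coord (pbA n) hdimA2 ?_
    rw [pbA_gen]; exact hco.1
  have hc2 : δ*(a*α+2*γ) - a*δ^2 = 0 := by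
    refine pb_one_coord (pbA n) hdimA ?_
    rw [pbA_gen, pow_one]; exact hco.2
  -- Step 4 : δ = ±1
  have hδ : δ = 1 ∨ δ = -1 := by
    have hsx1 : φ.symm (x₁ n a) = α • x₁ n a := by
      apply φ.injective
      rw [RingEquiv.apply_symm_apply, map_zsmul, h1', smul_smul, hα2, one_smul]
    have hsymm : δ • (φ.symm (x₂ n a)) = x₂ n a - (γ*α) • x₁ n a := by
      have hx2 : x₂ n a = γ • (α • x₁ n a) + δ • φ.symm (x₂ n a) := by
        conv_lhs => rw [← RingEquiv.symm_apply_apply φ (x₂ n a), h2]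
        rw [map_add, map_zsmul, map_zsmul, hsx1]
      rw [smul_smul] at hx2
      exact eq_sub_of_add_eq' hx2.symm
    obtain ⟨p, q, hpq⟩ := pb_repr_two (pbT n a) (pbT_dim n a) (ψ n a (φ.symm (x₂ n a)))
    rw [pbT_gen] at hpq
    have hE : (δ • p) • (1 : Tq n a) + (δ • q) • yT n a
        = (1 : Aq n) • yT n a - ((γ*α) • tA n) • (1 : Tq n a) := by
      rw [smul_assoc, smul_assoc, ← smul_add, ← hpq, ← map_zsmul, hsymm, map_sub,
        map_zsmul, ψ_x₁, ψ_x₂, one_smul, smulA_one, tT, zsmul_eq_mul]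
    have hE2 : (δ • p + (γ*α) • tA n) • ((yT n a)^0) + (δ • q - 1) • ((yT n a)^1) = 0 := by
      rw [pow_zero, pow_one, add_smul, sub_smul, one_smul]
      rw [one_smul] at hE
      rw [eq_sub_iff_add_eq] at hE
      linear_combination (norm := module) hE
    have h0 := (pb_two_coord (pbT n a) hdT0 hdT1 (by norm_num)
      (by rw [pbT_gen]; exact hE2)).2
    have : δ • q = (pbA n).gen ^ 0 := by
      rw [pow_zero]
      have := sub_eq_zero.mp h0
      exact this
    obtain ⟨d, hd⟩ := pb_dvd (pbA n) hdimA0 this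
    exact Int.isUnit_iff.mp (IsUnit.of_mul_eq_one _ hd)
  -- Step 5 : arithmetic
  refine ⟨rfl, ?_⟩
  have hδ2 : δ*δ = 1 := by rcases hδ with rfl | rfl <;> norm_num
  have hlin : a*α + 2*γ = a*δ := by
    have h := hc2
    have : δ*(δ*(a*α+2*γ)) = δ*(a*δ^2) := by rw [show δ*(a*α+2*γ) = a*δ^2 by omega]
    nlinarith [hδ2]
  rcases mul_eq_zero.mp hc1 with hγ | hγ
  · subst hγ
    have : α = δ := by
      have : a*α = a*δ := by omega
      exact mul_left_cancel₀ ha0 this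
    rcases hα with rfl | rfl
    · left; exact ⟨rfl, rfl, this.symm⟩
    · right; left; exact ⟨rfl, rfl, this.symm⟩
  · have hγ' : γ = -(a*α) := by omega
    have hδα : δ = -α := by
      have : a*δ = a*(-α) := by rw [mul_neg]; omega
      exact mul_left_cancel₀ ha0 this
    rcases hα with rfl | rfl
    · right; right; left
      refine ⟨rfl, by omega, by omega⟩
    · right; right; right
      refine ⟨rfl, by omega, by omega⟩

lemma x₂_rel' (n : ℕ) (a : ℤ) : (x₂ n a) * ((a : Rq n a) * x₁ n a + x₂ n a) = 0 := by
  have h := x₂_rel n a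
  rw [zsmul_eq_mul] at h
  exact h

lemma hom_ext {n : ℕ} {a : ℤ} {S : Type*} [CommRing S] {f g : Rq n a →+* S}
    (hx1 : f (x₁ n a) = g (x₁ n a)) (hx2 : f (x₂ n a) = g (x₂ n a)) : f = g := by
  apply Ideal.Quotient.ringHom_ext
  apply MvPolynomial.ringHom_ext
  · intro r
    simp only [RingHom.comp_apply]
    rw [Ca_cast n r]
    simp
  · intro i
    fin_cases i
    · exact hx1
    · exact hx2

lemma aut_ext {n : ℕ} {a : ℤ} {φ χ : RingAut (Rq n a)}
    (hx1 : φ (x₁ n a) = χ (x₁ n a)) (hx2 : φ (x₂ n a) = χ (x₂ n a)) : φ = χ := by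
  have h : (φ : Rq n a →+* Rq n a) = (χ : Rq n a →+* Rq n a) := hom_ext hx1 hx2
  exact RingEquiv.ext fun z => RingHom.congr_fun h z

noncomputable def endo (n : ℕ) (a : ℤ) (u v : Rq n a)
    (h1 : u ^ (n+1) = 0) (h2 : v * ((a : Rq n a) * u + v) = 0) : Rq n a →+* Rq n a :=
  Ideal.Quotient.lift _ (MvPolynomial.aeval ![u, v]).toRingHom (by
    intro p hp
    refine RingHom.mem_ker.mp ((?_ : Ideal.span _ ≤ RingHom.ker (MvPolynomial.aeval ![u, v]).toRingHom) hp)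
    rw [Ideal.span_le]
    rintro p hp
    simp only [Set.mem_insert_iff, Set.mem_singleton_iff] at hp
    rcases hp with rfl | rfl
    · simp only [SetLike.mem_coe, RingHom.mem_ker, AlgHom.toRingHom_eq_coe,
        RingHom.coe_coe, map_pow, MvPolynomial.aeval_X]
      simp only [Matrix.cons_val_zero]
      exact h1
    · simp only [SetLike.mem_coe, RingHom.mem_ker, AlgHom.toRingHom_eq_coe,
        RingHom.coe_coe, map_mul, map_add, MvPolynomial.aeval_X, MvPolynomial.aeval_C]
      have hh : (algebraMap ℤ (Rq n a)) a = (a : Rq n a) := by simp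
      rw [hh]
      simp only [Matrix.cons_val_one, Matrix.head_cons, Matrix.cons_val_zero]
      exact h2)

lemma endo_x₁ (n : ℕ) (a : ℤ) (u v : Rq n a) (h1 : u ^ (n+1) = 0)
    (h2 : v * ((a : Rq n a) * u + v) = 0) : endo n a u v h1 h2 (x₁ n a) = u := by
  rw [x₁, endo, Ideal.Quotient.lift_mk]
  simp

lemma endo_x₂ (n : ℕ) (a : ℤ) (u v : Rq n a) (h1 : u ^ (n+1) = 0)
    (h2 : v * ((a : Rq n a) * u + v) = 0) : endo n a u v h1 h2 (x₂ n a) = v := by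
  rw [x₂, endo, Ideal.Quotient.lift_mk]
  simp

-- the automorphism x₁ ↦ -x₁, x₂ ↦ -x₂
lemma pf2a (n : ℕ) (a : ℤ) : (-(x₁ n a)) ^ (n+1) = 0 := by
  have h2 : (-(x₁ n a)) ^ (n+1) = (-1)^(n+1) * (x₁ n a)^(n+1) := by
    rw [← mul_pow]; ring_nf
  rw [h2, x₁_pow, mul_zero]
lemma pf2b (n : ℕ) (a : ℤ) :
    (-(x₂ n a)) * ((a : Rq n a) * (-(x₁ n a)) + -(x₂ n a)) = 0 := by
  linear_combination x₂_rel' n a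

noncomputable def f2 (n : ℕ) (a : ℤ) : Rq n a →+* Rq n a :=
  endo n a (-(x₁ n a)) (-(x₂ n a)) (pf2a n a) (pf2b n a)

lemma f2_x₁ (n : ℕ) (a : ℤ) : f2 n a (x₁ n a) = -(x₁ n a) := endo_x₁ _ _ _ _ _ _
lemma f2_x₂ (n : ℕ) (a : ℤ) : f2 n a (x₂ n a) = -(x₂ n a) := endo_x₂ _ _ _ _ _ _

noncomputable def φ₂ (n : ℕ) (a : ℤ) : RingAut (Rq n a) :=
  RingEquiv.ofRingHom (f2 n a) (f2 n a)
    (hom_ext (by simp [f2_x₁, map_neg]) (by simp [f2_x₂, map_neg]))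
    (hom_ext (by simp [f2_x₁, map_neg]) (by simp [f2_x₂, map_neg]))

lemma φ2_x₁ (n : ℕ) (a : ℤ) : φ₂ n a (x₁ n a) = -(x₁ n a) := by
  rw [φ₂]
  exact f2_x₁ n a
lemma φ2_x₂ (n : ℕ) (a : ℤ) : φ₂ n a (x₂ n a) = -(x₂ n a) := by
  rw [φ₂]
  exact f2_x₂ n a

-- the automorphism x₁ ↦ x₁, x₂ ↦ -a x₁ - x₂
lemma pf3b (n : ℕ) (a : ℤ) :
    (-((a : Rq n a) * x₁ n a) - x₂ n a) *
      ((a : Rq n a) * (x₁ n a) + (-((a : Rq n a) * x₁ n a) - x₂ n a)) = 0 := by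
  linear_combination x₂_rel' n a

noncomputable def f3 (n : ℕ) (a : ℤ) : Rq n a →+* Rq n a :=
  endo n a (x₁ n a) (-((a : Rq n a) * x₁ n a) - x₂ n a) (x₁_pow n a) (pf3b n a)

lemma f3_x₁ (n : ℕ) (a : ℤ) : f3 n a (x₁ n a) = x₁ n a := endo_x₁ _ _ _ _ _ _
lemma f3_x₂ (n : ℕ) (a : ℤ) : f3 n a (x₂ n a) = -((a : Rq n a) * x₁ n a) - x₂ n a :=
  endo_x₂ _ _ _ _ _ _

lemma f3_invol (n : ℕ) (a : ℤ) : (f3 n a).comp (f3 n a) = RingHom.id (Rq n a) := by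
  apply hom_ext
  · simp [f3_x₁]
  · simp only [RingHom.comp_apply, RingHom.id_apply, f3_x₂, map_sub, map_neg, map_mul,
      map_intCast, f3_x₁]
    ring

noncomputable def φ₃ (n : ℕ) (a : ℤ) : RingAut (Rq n a) :=
  RingEquiv.ofRingHom (f3 n a) (f3 n a) (f3_invol n a) (f3_invol n a)

lemma φ3_x₁ (n : ℕ) (a : ℤ) : φ₃ n a (x₁ n a) = x₁ n a := by
  rw [φ₃]; exact f3_x₁ n a
lemma φ3_x₂ (n : ℕ) (a : ℤ) : φ₃ n a (x₂ n a) = -((a : Rq n a) * x₁ n a) - x₂ n a := by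
  rw [φ₃]; exact f3_x₂ n a

lemma indep (n : ℕ) (a : ℤ) (hn : 2 ≤ n) (c d : ℤ)
    (h : c • x₁ n a + d • x₂ n a = 0) : c = 0 ∧ d = 0 := by
  have hdimA1 : 1 < (pbA n).dim := by rw [pbA_dim]; omega
  have hdimA0 : 0 < (pbA n).dim := by rw [pbA_dim]; omega
  have hdT0 : 0 < (pbT n a).dim := by rw [pbT_dim]; omega
  have hdT1 : 1 < (pbT n a).dim := by rw [pbT_dim]; omega
  have hT : (c • tA n) • ((yT n a)^0) + (d • (1 : Aq n)) • ((yT n a)^1) = 0 := by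
    have hψ := congrArg (ψ n a) h
    rw [map_add, map_zsmul, map_zsmul, ψ_x₁, ψ_x₂, map_zero] at hψ
    rw [pow_zero, pow_one, smul_assoc, smul_assoc, one_smul]
    have h1 : (tA n) • (1 : Tq n a) = tT n a := by rw [Algebra.smul_def, mul_one]; rfl
    rw [h1]
    exact hψ
  have hco := pb_two_coord (pbT n a) hdT0 hdT1 (by norm_num) (by rw [pbT_gen]; exact hT)
  constructor
  · refine pb_one_coord (pbA n) hdimA1 ?_
    rw [pbA_gen, pow_one]; exact hco.1
  · refine pb_one_coord (pbA n) hdimA0 ?_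
    rw [pbA_gen, pow_zero]; exact hco.2

lemma mul_aut_apply {n : ℕ} {a : ℤ} (f g : RingAut (Rq n a)) (z : Rq n a) :
    (f * g) z = f (g z) := rfl
lemma one_aut_apply {n : ℕ} {a : ℤ} (z : Rq n a) : (1 : RingAut (Rq n a)) z = z := rfl

lemma φ2_sq (n : ℕ) (a : ℤ) : φ₂ n a * φ₂ n a = 1 := by
  apply aut_ext
  · rw [mul_aut_apply, φ2_x₁, map_neg, φ2_x₁, neg_neg, one_aut_apply]
  · rw [mul_aut_apply, φ2_x₂, map_neg, φ2_x₂, neg_neg, one_aut_apply]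

lemma φ3_sq (n : ℕ) (a : ℤ) : φ₃ n a * φ₃ n a = 1 := by
  apply aut_ext
  · rw [mul_aut_apply, φ3_x₁, φ3_x₁, one_aut_apply]
  · rw [mul_aut_apply, φ3_x₂, map_sub, map_neg, map_mul, map_intCast, φ3_x₁, φ3_x₂,
      one_aut_apply]
    ring

lemma φ4_x₁ (n : ℕ) (a : ℤ) : (φ₂ n a * φ₃ n a) (x₁ n a) = -(x₁ n a) := by
  rw [mul_aut_apply, φ3_x₁, φ2_x₁]

lemma φ4_x₂ (n : ℕ) (a : ℤ) :
    (φ₂ n a * φ₃ n a) (x₂ n a) = (a : Rq n a) * x₁ n a + x₂ n a := by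
  rw [mul_aut_apply, φ3_x₂, map_sub, map_neg, map_mul, map_intCast, φ2_x₁, φ2_x₂]
  ring

lemma φ_comm (n : ℕ) (a : ℤ) : φ₂ n a * φ₃ n a = φ₃ n a * φ₂ n a := by
  apply aut_ext
  · rw [φ4_x₁, mul_aut_apply, φ2_x₁, map_neg, φ3_x₁]
  · rw [φ4_x₂, mul_aut_apply, φ2_x₂, map_neg, φ3_x₂]
    ring

lemma φ_aux1 (n : ℕ) (a : ℤ) : φ₃ n a * (φ₂ n a * φ₃ n a) = φ₂ n a := by
  rw [φ_comm, ← mul_assoc, φ3_sq, one_mul]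
lemma φ_aux2 (n : ℕ) (a : ℤ) : φ₂ n a * (φ₂ n a * φ₃ n a) = φ₃ n a := by
  rw [← mul_assoc, φ2_sq, one_mul]
lemma φ_aux3 (n : ℕ) (a : ℤ) : (φ₂ n a * φ₃ n a) * φ₂ n a = φ₃ n a := by
  rw [φ_comm, mul_assoc, φ2_sq, mul_one]
lemma φ_aux4 (n : ℕ) (a : ℤ) : (φ₂ n a * φ₃ n a) * φ₃ n a = φ₂ n a := by
  rw [mul_assoc, φ3_sq, mul_one]
lemma φ_aux5 (n : ℕ) (a : ℤ) : (φ₂ n a * φ₃ n a) * (φ₂ n a * φ₃ n a) = 1 := by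
  rw [mul_assoc, φ_aux1, φ2_sq]

noncomputable def eAut (n : ℕ) (a : ℤ) : Multiplicative (ZMod 2 × ZMod 2) →* RingAut (Rq n a) where
  toFun g := (if (Multiplicative.toAdd g).1 = 0 then 1 else φ₂ n a) *
             (if (Multiplicative.toAdd g).2 = 0 then 1 else φ₃ n a)
  map_one' := by simp
  map_mul' g h := by
    have hz : ∀ z : ZMod 2, z = 0 ∨ z = 1 := by decide
    rw [show Multiplicative.toAdd (g * h) = Multiplicative.toAdd g + Multiplicative.toAdd h
      from rfl, Prod.fst_add, Prod.snd_add]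
    rcases hz (Multiplicative.toAdd g).1 with h1 | h1 <;>
      rcases hz (Multiplicative.toAdd g).2 with h2 | h2 <;>
      rcases hz (Multiplicative.toAdd h).1 with h3 | h3 <;>
      rcases hz (Multiplicative.toAdd h).2 with h4 | h4 <;>
      rw [h1, h2, h3, h4] <;>
      simp only [show ((0:ZMod 2) + 0) = 0 by decide, show ((0:ZMod 2) + 1) = 1 by decide,
        show ((1:ZMod 2) + 0) = 1 by decide, show ((1:ZMod 2) + 1) = 0 by decide] <;>
      simp only [(by decide : ((1:ZMod 2) = 0) = False), (by decide : ((0:ZMod 2) = 0) = True),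
        if_true, if_false, one_mul, mul_one] <;>
      first
        | rfl
        | rw [φ2_sq]
        | rw [φ3_sq]
        | rw [φ_aux1]
        | rw [φ_aux2]
        | rw [φ_aux3]
        | rw [φ_aux4]
        | rw [φ_aux5]
        | rw [φ_comm]

lemma eAut_def (n : ℕ) (a : ℤ) (g : Multiplicative (ZMod 2 × ZMod 2)) :
    eAut n a g = (if (Multiplicative.toAdd g).1 = 0 then 1 else φ₂ n a) *
      (if (Multiplicative.toAdd g).2 = 0 then 1 else φ₃ n a) := rfl

lemma neg_x₁_ne (n : ℕ) (a : ℤ) (hn : 2 ≤ n) : -(x₁ n a) ≠ x₁ n a := by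
  intro h
  have h2 : (-2 : ℤ) • x₁ n a + (0 : ℤ) • x₂ n a = 0 := by
    rw [zsmul_eq_mul, zsmul_eq_mul]; push_cast; linear_combination h
  have := (indep n a hn _ _ h2).1
  omega

lemma phi3_x₂_ne (n : ℕ) (a : ℤ) (hn : 2 ≤ n) (ha0 : a ≠ 0) :
    -((a : Rq n a) * x₁ n a) - x₂ n a ≠ x₂ n a := by
  intro h
  have h2 : (-a) • x₁ n a + (-2 : ℤ) • x₂ n a = 0 := by
    rw [zsmul_eq_mul, zsmul_eq_mul]; push_cast; linear_combination h
  have := (indep n a hn _ _ h2).1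
  omega

lemma eAut_injective (n : ℕ) (a : ℤ) (hn : 2 ≤ n) (ha0 : a ≠ 0) :
    Function.Injective (eAut n a) := by
  rw [injective_iff_map_eq_one]
  intro g hg
  have hz : ∀ z : ZMod 2, z = 0 ∨ z = 1 := by decide
  rw [eAut_def] at hg
  rcases hz (Multiplicative.toAdd g).1 with h1 | h1 <;>
    rcases hz (Multiplicative.toAdd g).2 with h2 | h2 <;>
    rw [h1, h2] at hg <;>
    simp only [(by decide : ((1:ZMod 2) = 0) = False), (by decide : ((0:ZMod 2) = 0) = True),
      if_true, if_false, one_mul, mul_one] at hg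
  · apply Multiplicative.toAdd.injective
    have : Multiplicative.toAdd (1 : Multiplicative (ZMod 2 × ZMod 2)) = 0 := rfl
    rw [this]
    exact Prod.ext_iff.mpr ⟨h1, h2⟩
  · exfalso
    have := congrArg (fun χ : RingAut (Rq n a) => χ (x₂ n a)) hg
    simp only [φ3_x₂, one_aut_apply] at this
    exact phi3_x₂_ne n a hn ha0 this
  · exfalso
    have := congrArg (fun χ : RingAut (Rq n a) => χ (x₁ n a)) hg
    simp only [φ2_x₁, one_aut_apply] at this
    exact neg_x₁_ne n a hn this
  · exfalso
    have := congrArg (fun χ : RingAut (Rq n a) => χ (x₁ n a)) hg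
    simp only [φ4_x₁, one_aut_apply] at this
    exact neg_x₁_ne n a hn this

lemma isGraded_of_mem_range (n : ℕ) (a : ℤ) (φ : RingAut (Rq n a))
    (h : φ ∈ Set.range (eAut n a)) : IsGraded n a φ := by
  obtain ⟨g, rfl⟩ := h
  have hz : ∀ z : ZMod 2, z = 0 ∨ z = 1 := by decide
  rcases hz (Multiplicative.toAdd g).1 with h1 | h1 <;>
    rcases hz (Multiplicative.toAdd g).2 with h2 | h2 <;>
    (rw [IsGraded, eAut_def, h1, h2]) <;>
    simp only [(by decide : ((1:ZMod 2) = 0) = False), (by decide : ((0:ZMod 2) = 0) = True),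
      if_true, if_false, one_mul, mul_one]
  · constructor
    · exact Submodule.mem_span_pair.mpr ⟨1, 0, by simp [one_aut_apply]⟩
    · exact Submodule.mem_span_pair.mpr ⟨0, 1, by simp [one_aut_apply]⟩
  · constructor
    · exact Submodule.mem_span_pair.mpr ⟨1, 0, by
        rw [φ3_x₁, zsmul_eq_mul, zsmul_eq_mul]; push_cast; ring⟩
    · exact Submodule.mem_span_pair.mpr ⟨-a, -1, by
        rw [φ3_x₂, zsmul_eq_mul, zsmul_eq_mul]; push_cast; ring⟩
  · constructor
    · exact Submodule.mem_span_pair.mpr ⟨-1, 0, by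
        rw [φ2_x₁, zsmul_eq_mul, zsmul_eq_mul]; push_cast; ring⟩
    · exact Submodule.mem_span_pair.mpr ⟨0, -1, by
        rw [φ2_x₂, zsmul_eq_mul, zsmul_eq_mul]; push_cast; ring⟩
  · constructor
    · exact Submodule.mem_span_pair.mpr ⟨-1, 0, by
        rw [φ4_x₁, zsmul_eq_mul, zsmul_eq_mul]; push_cast; ring⟩
    · exact Submodule.mem_span_pair.mpr ⟨a, 1, by
        rw [φ4_x₂, zsmul_eq_mul, zsmul_eq_mul]; push_cast; ring⟩

lemma eAut_elt2 (n : ℕ) (a : ℤ) :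
    eAut n a (Multiplicative.ofAdd ((1 : ZMod 2), (0 : ZMod 2))) = φ₂ n a := by
  rw [eAut_def]
  simp only [toAdd_ofAdd,
    (by decide : ((1:ZMod 2) = 0) = False), (by decide : ((0:ZMod 2) = 0) = True),
    if_true, if_false, one_mul, mul_one]

lemma eAut_elt3 (n : ℕ) (a : ℤ) :
    eAut n a (Multiplicative.ofAdd ((0 : ZMod 2), (1 : ZMod 2))) = φ₃ n a := by
  rw [eAut_def]
  simp only [toAdd_ofAdd,
    (by decide : ((1:ZMod 2) = 0) = False), (by decide : ((0:ZMod 2) = 0) = True),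
    if_true, if_false, one_mul, mul_one]

lemma eAut_elt4 (n : ℕ) (a : ℤ) :
    eAut n a (Multiplicative.ofAdd ((1 : ZMod 2), (1 : ZMod 2))) = φ₂ n a * φ₃ n a := by
  rw [eAut_def]
  simp only [toAdd_ofAdd,
    (by decide : ((1:ZMod 2) = 0) = False),
    if_false]

lemma mem_range_of_isGraded (n : ℕ) (a : ℤ) (hn : 2 ≤ n) (heven : Even n)
    (ha : a = 1 ∨ a = 2) (φ : RingAut (Rq n a)) (h : IsGraded n a φ) :
    φ ∈ Set.range (eAut n a) := by
  obtain ⟨α, β, hαβ⟩ := Submodule.mem_span_pair.mp h.1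
  obtain ⟨γ, δ, hγδ⟩ := Submodule.mem_span_pair.mp h.2
  obtain ⟨hβ, hcase⟩ := key n a hn heven ha φ α β γ δ hαβ.symm hγδ.symm
  subst hβ
  rw [zero_smul, add_zero] at hαβ
  rcases hcase with ⟨hα, hγ, hδ⟩ | ⟨hα, hγ, hδ⟩ | ⟨hα, hγ, hδ⟩ | ⟨hα, hγ, hδ⟩ <;>
    subst hα <;> subst hγ <;> subst hδ
  · refine ⟨1, ?_⟩
    rw [map_one]
    apply aut_ext
    · rw [one_aut_apply, ← hαβ, one_smul]
    · rw [one_aut_apply, ← hγδ, zero_smul, one_smul, zero_add]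
  · refine ⟨Multiplicative.ofAdd ((1 : ZMod 2), (0 : ZMod 2)), ?_⟩
    rw [eAut_elt2]
    apply aut_ext
    · rw [φ2_x₁, ← hαβ, neg_smul, one_smul]
    · rw [φ2_x₂, ← hγδ, zero_smul, zero_add, neg_smul, one_smul]
  · refine ⟨Multiplicative.ofAdd ((0 : ZMod 2), (1 : ZMod 2)), ?_⟩
    rw [eAut_elt3]
    apply aut_ext
    · rw [φ3_x₁, ← hαβ, one_smul]
    · rw [φ3_x₂, ← hγδ, zsmul_eq_mul, zsmul_eq_mul]
      push_cast
      ring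
  · refine ⟨Multiplicative.ofAdd ((1 : ZMod 2), (1 : ZMod 2)), ?_⟩
    rw [eAut_elt4]
    apply aut_ext
    · rw [φ4_x₁, ← hαβ, neg_smul, one_smul]
    · rw [φ4_x₂, ← hγδ, zsmul_eq_mul, zsmul_eq_mul]
      push_cast
      ring

end RqAux

open RqAux

/-- For `n ≥ 2` even and `a ∈ {1,2}`, the graded ring automorphisms of
`R = ℤ[x₁,x₂]/⟨x₁^{n+1}, x₂(a·x₁+x₂)⟩`, identified with integer 2×2 matrices acting on the
degree-2 part, are exactly the four matrices `I, -I, (1,0;-a,-1), (-1,0;a,1)`; moreover the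
group of graded automorphisms is isomorphic to `ℤ/2 × ℤ/2`. -/
theorem stmt1 (n : ℕ) (a : ℤ) (hn : 2 ≤ n) (heven : Even n) (ha : a = 1 ∨ a = 2) :
    (∀ (φ : RingAut (Rq n a)) (g : Matrix (Fin 2) (Fin 2) ℤ),
        φ (x₁ n a) = g 0 0 • x₁ n a + g 0 1 • x₂ n a →
        φ (x₂ n a) = g 1 0 • x₁ n a + g 1 1 • x₂ n a →
        g ∈ ({1, -1, !![1, 0; -a, -1], !![-1, 0; a, 1]} :
          Set (Matrix (Fin 2) (Fin 2) ℤ))) ∧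
    (∀ g ∈ ({1, -1, !![1, 0; -a, -1], !![-1, 0; a, 1]} :
          Set (Matrix (Fin 2) (Fin 2) ℤ)),
        ∃ φ : RingAut (Rq n a),
          φ (x₁ n a) = g 0 0 • x₁ n a + g 0 1 • x₂ n a ∧
          φ (x₂ n a) = g 1 0 • x₁ n a + g 1 1 • x₂ n a) ∧
    (∃ e : Multiplicative (ZMod 2 × ZMod 2) →* RingAut (Rq n a),
        Function.Injective e ∧
        ∀ φ : RingAut (Rq n a), φ ∈ Set.range e ↔ IsGraded n a φ) := by
  have ha0 : a ≠ 0 := by rcases ha with rfl | rfl <;> norm_num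
  refine ⟨?_, ?_, ?_⟩
  · -- part A
    intro φ g hg1 hg2
    obtain ⟨hβ, hcase⟩ := key n a hn heven ha φ (g 0 0) (g 0 1) (g 1 0) (g 1 1) hg1 hg2
    simp only [Set.mem_insert_iff, Set.mem_singleton_iff]
    rcases hcase with ⟨h00, h10, h11⟩ | ⟨h00, h10, h11⟩ | ⟨h00, h10, h11⟩ | ⟨h00, h10, h11⟩
    · left
      ext i j
      fin_cases i <;> fin_cases j <;>
        simp [h00, hβ, h10, h11, Matrix.one_apply]
    · right; left
      ext i j
      fin_cases i <;> fin_cases j <;>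
        simp [h00, hβ, h10, h11, Matrix.neg_apply, Matrix.one_apply]
    · right; right; left
      ext i j
      fin_cases i <;> fin_cases j <;>
        simp [h00, hβ, h10, h11]
    · right; right; right
      ext i j
      fin_cases i <;> fin_cases j <;>
        simp [h00, hβ, h10, h11]
  · -- part B
    intro g hg
    simp only [Set.mem_insert_iff, Set.mem_singleton_iff] at hg
    rcases hg with rfl | rfl | rfl | rfl
    · exact ⟨1, by simp [one_aut_apply, Matrix.one_apply],
        by simp [one_aut_apply, Matrix.one_apply]⟩
    · refine ⟨φ₂ n a, ?_, ?_⟩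
      · rw [φ2_x₁]
        simp [Matrix.neg_apply, Matrix.one_apply]
      · rw [φ2_x₂]
        simp [Matrix.neg_apply, Matrix.one_apply]
    · refine ⟨φ₃ n a, ?_, ?_⟩
      · rw [φ3_x₁]
        simp
      · rw [φ3_x₂]
        have h10 : !![(1:ℤ), 0; -a, -1] 1 0 = -a := by simp
        have h11 : !![(1:ℤ), 0; -a, -1] 1 1 = -1 := by simp
        rw [h10, h11, zsmul_eq_mul, zsmul_eq_mul]
        push_cast
        ring
    · refine ⟨φ₂ n a * φ₃ n a, ?_, ?_⟩
      · rw [φ4_x₁]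
        simp
      · rw [φ4_x₂]
        have h10 : !![(-1:ℤ), 0; a, 1] 1 0 = a := by simp
        have h11 : !![(-1:ℤ), 0; a, 1] 1 1 = 1 := by simp
        rw [h10, h11, zsmul_eq_mul, zsmul_eq_mul]
        push_cast
        ring
  · -- part C
    refine ⟨eAut n a, eAut_injective n a hn ha0, fun φ => ?_⟩
    constructor
    · exact isGraded_of_mem_range n a φ
    · exact mem_range_of_isGraded n a hn heven ha φ
end

section
/- Let K be the subgroup of the torus T² = (S¹)² acting on S^{2n+1} × S^{2m+1} ⊂ ℂ^{n+1} × ℂ^{m+1} by (t₁,t₂)·((w₁,…,w_{n+1}),(z₁,…,z_{m+1})) = ((t₁t₂^{b₁}w₁,…,t₁t₂^{b_n}w_n, t₁w_{n+1}), (t₁^{a₁}t₂z₁,…,t₁^{a_m}t₂z_m, t₂z_{m+1})). If 1 − a_j b_i = ±1 for all i,j, then this action is free. -/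
lemma exists_ne_zero_of_sum_sq_norm (k : ℕ) (v : Fin (k+1) → ℂ)
    (hv : ∑ i, ‖v i‖ ^ 2 = 1) : ∃ i, v i ≠ 0 := by
  by_contra h
  push_neg at h
  simp [h] at hv

/-- The `T²`-action on `S^{2n+1} × S^{2m+1} ⊂ ℂ^{n+1} × ℂ^{m+1}` given by
`(t₁,t₂)·((wᵢ),(zⱼ)) = ((t₁t₂^{bᵢ}wᵢ, t₁w_{n+1}), (t₁^{aⱼ}t₂zⱼ, t₂z_{m+1}))` is free,
provided `1 - aⱼbᵢ = ±1` for all `i, j`:  if a point of `S^{2n+1} × S^{2m+1}` is fixed by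
`(t₁,t₂)` with `|t₁| = |t₂| = 1`, then `t₁ = t₂ = 1`. -/
theorem stmt17 (n m : ℕ) (a : Fin m → ℤ) (b : Fin n → ℤ)
    (hab : ∀ (i : Fin n) (j : Fin m), 1 - a j * b i = 1 ∨ 1 - a j * b i = -1)
    (t₁ t₂ : ℂ) (ht₁ : ‖t₁‖ = 1) (ht₂ : ‖t₂‖ = 1)
    (w : Fin (n + 1) → ℂ) (z : Fin (m + 1) → ℂ)
    (hw : ∑ i, ‖w i‖ ^ 2 = 1) (hz : ∑ j, ‖z j‖ ^ 2 = 1)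
    (hfw : ∀ i : Fin n, t₁ * t₂ ^ (b i) * w i.castSucc = w i.castSucc)
    (hfwlast : t₁ * w (Fin.last n) = w (Fin.last n))
    (hfz : ∀ j : Fin m, t₁ ^ (a j) * t₂ * z j.castSucc = z j.castSucc)
    (hfzlast : t₂ * z (Fin.last m) = z (Fin.last m)) :
    t₁ = 1 ∧ t₂ = 1 := by
  have ht₁0 : t₁ ≠ 0 := by intro h; simp [h] at ht₁
  have ht₂0 : t₂ ≠ 0 := by intro h; simp [h] at ht₂
  obtain ⟨i, hi⟩ := exists_ne_zero_of_sum_sq_norm n w hw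
  obtain ⟨j, hj⟩ := exists_ne_zero_of_sum_sq_norm m z hz
  -- each nonzero coordinate gives a multiplicative relation
  rcases Fin.eq_castSucc_or_eq_last i with ⟨i', rfl⟩ | rfl
  · have hwi : t₁ * t₂ ^ (b i') = 1 := by
      have h' : (t₁ * t₂ ^ (b i') - 1) * w i'.castSucc = 0 := by linear_combination hfw i'
      rcases mul_eq_zero.mp h' with h | h
      · have := sub_eq_zero.mp h; linear_combination this
      · exact absurd h hi
    rcases Fin.eq_castSucc_or_eq_last j with ⟨j', rfl⟩ | rfl
    · have hzj : t₁ ^ (a j') * t₂ = 1 := by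
        have h' : (t₁ ^ (a j') * t₂ - 1) * z j'.castSucc = 0 := by linear_combination hfz j'
        rcases mul_eq_zero.mp h' with h | h
        · have := sub_eq_zero.mp h; linear_combination this
        · exact absurd h hj
      -- t₁ = t₂ ^ (-b i')
      have h1 : t₁ = t₂ ^ (-(b i')) := by
        rw [zpow_neg]
        exact eq_inv_of_mul_eq_one_left hwi
      have h2 : t₂ ^ (1 - a j' * b i') = 1 := by
        rw [h1, ← zpow_mul] at hzj
        have he : 1 - a j' * b i' = -(b i') * a j' + 1 := by ring
        rw [he, zpow_add_one₀ ht₂0]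
        exact hzj
      have ht2 : t₂ = 1 := by
        rcases hab i' j' with h | h
        · rw [h, zpow_one] at h2; exact h2
        · rw [h, zpow_neg_one] at h2
          exact inv_eq_one.mp h2
      refine ⟨?_, ht2⟩
      rw [ht2] at hwi
      simpa using hwi
    · have ht2 : t₂ = 1 := by
        have := hfzlast
        have h' : (t₂ - 1) * z (Fin.last m) = 0 := by linear_combination this
        rcases mul_eq_zero.mp h' with h | h
        · exact sub_eq_zero.mp h
        · exact absurd h hj
      refine ⟨?_, ht2⟩
      rw [ht2] at hwi
      simpa using hwi
  · have ht1 : t₁ = 1 := by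
      have h' : (t₁ - 1) * w (Fin.last n) = 0 := by linear_combination hfwlast
      rcases mul_eq_zero.mp h' with h | h
      · exact sub_eq_zero.mp h
      · exact absurd h hi
    refine ⟨ht1, ?_⟩
    rcases Fin.eq_castSucc_or_eq_last j with ⟨j', rfl⟩ | rfl
    · have := hfz j'
      rw [ht1, one_zpow, one_mul] at this
      have h' : (t₂ - 1) * z j'.castSucc = 0 := by linear_combination this
      rcases mul_eq_zero.mp h' with h | h
      · exact sub_eq_zero.mp h
      · exact absurd h hj
    · have h' : (t₂ - 1) * z (Fin.last m) = 0 := by linear_combination hfzlast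
      rcases mul_eq_zero.mp h' with h | h
      · exact sub_eq_zero.mp h
      · exact absurd h hj
end
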